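/- For every integer k ≥ 2, the graph G_k (defined below) satisfies sd(u,v) ≥ k for every pair of distinct vertices u, v; hence the class of ABC graphs, and hence the class of interval graphs, has unbounded symmetric difference. -/

import Mathlib

open Finset
open scoped Classical

variable {V : Type*}

/-- `sdPair G x y`: the number of vertices other than `x, y` adjacent to exactly
one of `x` and `y`. -/
noncomputable def sdPair [Fintype V] (G : SimpleGraph V) (x y : V) : ℕ :=
  (univ.filter fun z => z ≠ x ∧ z ≠ y ∧ ¬(G.Adj z x ↔ G.Adj z y)).card

/-- The set `B = ⋃_{i,j ∈ [k]} B_{ij} ⊆ ℤ²`, where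
`B₁₁ = {(pk − q, qk + p) : 1 ≤ p ≤ k, 0 ≤ q ≤ k − 1}` and
`B_{ij} = B₁₁ + ((i−1)k², (j−1)k²)`. -/
noncomputable def Bset (k : ℕ) : Finset (ℤ × ℤ) :=
  ((Finset.Icc (1 : ℤ) k ×ˢ Finset.Icc (0 : ℤ) ((k : ℤ) - 1)) ×ˢ
      (Finset.Icc (1 : ℤ) k ×ˢ Finset.Icc (1 : ℤ) k)).image
    fun x => (x.1.1 * k - x.1.2 + (x.2.1 - 1) * (k : ℤ) ^ 2,
              x.1.2 * k + x.1.1 + (x.2.2 - 1) * (k : ℤ) ^ 2)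

/-- Vertices of the graph `G_k`: the clique `A = {a_1, …, a_{k³}}`, the clique `B`
(one vertex for each point of `Bset k`), and the clique `C = {c_1, …, c_{k³}}`.
Here `Fin (k^3)` index `i` represents `a_{i+1}` (resp. `c_{i+1}`). -/
abbrev GkVtx (k : ℕ) := Fin (k ^ 3) ⊕ ({ b : ℤ × ℤ // b ∈ Bset k } ⊕ Fin (k ^ 3))

/-- The underlying relation of `G_k`: `A`, `B`, `C` are cliques, `a_i` is adjacent
to `(b_x, b_y) ∈ B` iff `i < b_x`, `(b_x, b_y)` is adjacent to `c_j` iff `b_y < j`,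
and there are no `A`–`C` edges. -/
def GkRel (k : ℕ) : GkVtx k → GkVtx k → Prop
  | Sum.inl i, Sum.inl j => i ≠ j
  | Sum.inl i, Sum.inr (Sum.inl b) => (i : ℤ) + 1 < b.1.1
  | Sum.inr (Sum.inl b), Sum.inr (Sum.inl b') => b ≠ b'
  | Sum.inr (Sum.inl b), Sum.inr (Sum.inr j) => b.1.2 < (j : ℤ) + 1
  | Sum.inr (Sum.inr i), Sum.inr (Sum.inr j) => i ≠ j
  | _, _ => False

/-- The graph `G_k`. -/
def Gk (k : ℕ) : SimpleGraph (GkVtx k) := SimpleGraph.fromRel (GkRel k)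

/-- `H` is an ABC graph: its vertex set splits into three cliques `A`, `B`, `C` of
equal size `n` with no `A`–`C` edges, such that the `A`–`B` edges and the `B`–`C`
edges each form a half graph (under independent orderings of `B`). -/
def IsABCGraph {W : Type*} (H : SimpleGraph W) : Prop :=
  ∃ (n : ℕ) (e : Fin 3 × Fin n ≃ W) (α β : Equiv.Perm (Fin n)),
    (∀ m : Fin 3, ∀ i j : Fin n, H.Adj (e (m, i)) (e (m, j)) ↔ i ≠ j) ∧
    (∀ i j, H.Adj (e (0, i)) (e (1, j)) ↔ i < α j) ∧
    (∀ i j, H.Adj (e (1, i)) (e (2, j)) ↔ β i < j) ∧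
    (∀ i j, ¬ H.Adj (e (0, i)) (e (2, j)))

/-- `G` is an interval graph. -/
def IsIntervalGraph (G : SimpleGraph V) : Prop :=
  ∃ L R : V → ℝ, (∀ v, L v ≤ R v) ∧
    ∀ u v, G.Adj u v ↔ u ≠ v ∧ L u ≤ R v ∧ L v ≤ R u


lemma mem_Bset_iff {k : ℕ} {v : ℤ × ℤ} :
    v ∈ Bset k ↔ ∃ p q i j : ℤ, (1 ≤ p ∧ p ≤ k) ∧ (0 ≤ q ∧ q ≤ (k:ℤ) - 1) ∧
      (1 ≤ i ∧ i ≤ k) ∧ (1 ≤ j ∧ j ≤ k) ∧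
      v.1 = p * k - q + (i - 1) * (k:ℤ)^2 ∧ v.2 = q * k + p + (j - 1) * (k:ℤ)^2 := by
  simp only [Bset, mem_image, mem_product, mem_Icc, Prod.ext_iff]
  constructor
  · rintro ⟨⟨⟨p, q⟩, ⟨i, j⟩⟩, ⟨⟨⟨h1, h2⟩, h3, h4⟩, ⟨h5, h6⟩, h7, h8⟩, h9, h10⟩
    exact ⟨p, q, i, j, ⟨h1, h2⟩, ⟨h3, h4⟩, ⟨h5, h6⟩, ⟨h7, h8⟩, h9.symm, h10.symm⟩
  · rintro ⟨p, q, i, j, ⟨h1, h2⟩, ⟨h3, h4⟩, ⟨h5, h6⟩, ⟨h7, h8⟩, h9, h10⟩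
    exact ⟨⟨⟨p, q⟩, ⟨i, j⟩⟩, ⟨⟨⟨h1, h2⟩, h3, h4⟩, ⟨h5, h6⟩, h7, h8⟩, h9.symm, h10.symm⟩

lemma Bset_bounds {k : ℕ} (hk : 2 ≤ k) {v : ℤ × ℤ} (hv : v ∈ Bset k) :
    (1 ≤ v.1 ∧ v.1 ≤ (k:ℤ)^3) ∧ (1 ≤ v.2 ∧ v.2 ≤ (k:ℤ)^3) := by
  rw [mem_Bset_iff] at hv
  obtain ⟨p, q, i, j, ⟨h1, h2⟩, ⟨h3, h4⟩, ⟨h5, h6⟩, ⟨h7, h8⟩, h9, h10⟩ := hv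
  have hk2 : (2:ℤ) ≤ k := by exact_mod_cast hk
  constructor
  · constructor
    · rw [h9]; nlinarith
    · rw [h9]; nlinarith
  · constructor
    · rw [h10]; nlinarith
    · rw [h10]; nlinarith

lemma abs_sub_le' (a b : ℤ) : |a - b| ≤ |a| + |b| := by
  calc |a - b| = |a + (-b)| := by ring_nf
  _ ≤ |a| + |-b| := abs_add_le _ _
  _ = |a| + |b| := by rw [abs_neg]

lemma uniq_decomp (K : ℤ) (hK : 2 ≤ K) (d e D : ℤ)
    (hd : |d| ≤ K - 1) (he : |e| ≤ K - 1) (h : d * K - e + D * K ^ 2 = 0) :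
    d = 0 ∧ e = 0 ∧ D = 0 := by
  have hD : D = 0 := by
    by_contra hD
    have h1 : 1 ≤ |D| := Int.one_le_abs hD
    have h2 : K^2 ≤ |D * K^2| := by
      rw [abs_mul, abs_of_nonneg (by positivity : (0:ℤ) ≤ K^2)]; nlinarith
    have h3 : |D * K^2| = |d * K - e| := by
      have : D * K^2 = -(d*K - e) := by linarith
      rw [this, abs_neg]
    have h4 : |d * K - e| ≤ |d * K| + |e| := abs_sub_le' _ _
    have h5 : |d * K| = |d| * K := by rw [abs_mul, abs_of_nonneg (by linarith : (0:ℤ) ≤ K)]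
    nlinarith [abs_nonneg d, abs_nonneg e]
  subst hD
  have he' : e = d * K := by linarith
  have hd0 : d = 0 := by
    by_contra hd0
    have h1 : 1 ≤ |d| := Int.one_le_abs hd0
    have : |e| = |d| * K := by rw [he', abs_mul, abs_of_nonneg (by linarith : (0:ℤ) ≤ K)]
    nlinarith
  subst hd0; simp at he'; exact ⟨rfl, he', rfl⟩

lemma key_sep (K : ℤ) (hK : 2 ≤ K) (d e D E X Y : ℤ)
    (hd : |d| ≤ K - 1) (he : |e| ≤ K - 1)
    (hX : X = d * K - e + D * K ^ 2) (hY : Y = e * K + d + E * K ^ 2)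
    (hXY : |X| + |Y| < K) :
    d = 0 ∧ e = 0 ∧ D = 0 ∧ E = 0 ∧ X = 0 ∧ Y = 0 := by
  have hKpos : (0:ℤ) ≤ K := by linarith
  have habsX := abs_nonneg X
  have habsY := abs_nonneg Y
  have h1 : |K * X + Y| ≤ K * (K - 1) := by
    calc |K * X + Y| ≤ |K * X| + |Y| := abs_add_le _ _
    _ = K * |X| + |Y| := by rw [abs_mul, abs_of_nonneg hKpos]
    _ ≤ K * (K - 1) := by nlinarith
  have h2 : |K * Y - X| ≤ K * (K - 1) := by
    calc |K * Y - X| ≤ |K * Y| + |X| := abs_sub_le' _ _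
    _ = K * |Y| + |X| := by rw [abs_mul, abs_of_nonneg hKpos]
    _ ≤ K * (K - 1) := by nlinarith
  have hM : d + K * D + E = 0 := by
    by_contra hM
    have h3 : 1 ≤ |d + K * D + E| := Int.one_le_abs hM
    have h4 : K * X + Y = d + (d + K * D + E) * K ^ 2 := by rw [hX, hY]; ring
    have h5 : |(d + K * D + E) * K ^ 2| ≤ |K * X + Y| + |d| := by
      calc |(d + K * D + E) * K ^ 2| = |(K * X + Y) - d| := by rw [h4]; ring_nf
      _ ≤ |K * X + Y| + |d| := abs_sub_le' _ _
    have h6 : K ^ 2 ≤ |(d + K * D + E) * K ^ 2| := by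
      rw [abs_mul, abs_of_nonneg (by positivity : (0:ℤ) ≤ K^2)]; nlinarith
    nlinarith
  have hN : e + K * E - D = 0 := by
    by_contra hN
    have h3 : 1 ≤ |e + K * E - D| := Int.one_le_abs hN
    have h4 : K * Y - X = e + (e + K * E - D) * K ^ 2 := by rw [hX, hY]; ring
    have h5 : |(e + K * E - D) * K ^ 2| ≤ |K * Y - X| + |e| := by
      calc |(e + K * E - D) * K ^ 2| = |(K * Y - X) - e| := by rw [h4]; ring_nf
      _ ≤ |K * Y - X| + |e| := abs_sub_le' _ _
    have h6 : K ^ 2 ≤ |(e + K * E - D) * K ^ 2| := by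
      rw [abs_mul, abs_of_nonneg (by positivity : (0:ℤ) ≤ K^2)]; nlinarith
    nlinarith
  have hkXY : K * X + Y = d := by rw [hX, hY]; linear_combination (K^2) * hM
  have hkYX : K * Y - X = e := by rw [hX, hY]; linear_combination (K^2) * hN
  have hXX : (K ^ 2 + 1) * X = K * d - e := by linear_combination K * hkXY - hkYX
  have hX0 : X = 0 := by
    by_contra h
    have h3 : 1 ≤ |X| := Int.one_le_abs h
    have h4 : K ^ 2 + 1 ≤ |(K ^ 2 + 1) * X| := by
      rw [abs_mul, abs_of_nonneg (by positivity : (0:ℤ) ≤ K^2 + 1)]; nlinarith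
    rw [hXX] at h4
    have h5 : |K * d - e| ≤ |K * d| + |e| := abs_sub_le' _ _
    have h6 : |K * d| = K * |d| := by rw [abs_mul, abs_of_nonneg hKpos]
    nlinarith
  have hed : e = K * d := by rw [hX0] at hXX; linarith
  have hd0 : d = 0 := by
    by_contra hd0
    have h3 : 1 ≤ |d| := Int.one_le_abs hd0
    have : |e| = K * |d| := by rw [hed, abs_mul, abs_of_nonneg hKpos]
    nlinarith
  subst hd0
  have he0 : e = 0 := by simpa using hed
  subst he0
  have hY0 : Y = 0 := by rw [hX0] at hkXY; linarith
  have hDE : D = -(K^2) * D := by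
    have hE : E = -(K * D) := by linarith
    rw [hE] at hN; linear_combination -hN
  have hD0 : D = 0 := by nlinarith [sq_nonneg D, sq_nonneg K]
  subst hD0
  have hE0 : E = 0 := by linarith
  exact ⟨rfl, rfl, rfl, hE0, hX0, hY0⟩

section

variable {k : ℕ}

lemma exists_rep_x (hk : 2 ≤ k) (m : ℤ) (h1 : 1 ≤ m) (h2 : m ≤ (k:ℤ)^3) :
    ∃ p q i : ℤ, (1 ≤ p ∧ p ≤ k) ∧ (0 ≤ q ∧ q ≤ (k:ℤ) - 1) ∧ (1 ≤ i ∧ i ≤ k) ∧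
      m = p * k - q + (i - 1) * (k:ℤ)^2 := by
  have hK : (2:ℤ) ≤ k := by exact_mod_cast hk
  have hK0 : (0:ℤ) < k := by linarith
  have hK2 : (0:ℤ) < (k:ℤ)^2 := by positivity
  set r : ℤ := (m - 1) % (k:ℤ)^2 with hr_def
  have hr0 : 0 ≤ r := Int.emod_nonneg _ (ne_of_gt hK2)
  have hr1 : r < (k:ℤ)^2 := Int.emod_lt_of_pos _ hK2
  have hs0 : 0 ≤ r % k := Int.emod_nonneg _ (ne_of_gt hK0)
  have hs1 : r % k < k := Int.emod_lt_of_pos _ hK0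
  have hq0 : 0 ≤ r / k := Int.ediv_nonneg hr0 (le_of_lt hK0)
  have hq1 : r / k < k := by
    rw [Int.ediv_lt_iff_lt_mul hK0]; nlinarith
  have hi0 : 0 ≤ (m - 1) / (k:ℤ)^2 := Int.ediv_nonneg (by linarith) (le_of_lt hK2)
  have hi1 : (m - 1) / (k:ℤ)^2 < k := by
    rw [Int.ediv_lt_iff_lt_mul hK2]; nlinarith
  refine ⟨r / k + 1, (k:ℤ) - 1 - r % k, (m - 1) / (k:ℤ)^2 + 1,
    ⟨by linarith, by linarith⟩, ⟨by linarith, by linarith⟩, ⟨by linarith, by linarith⟩, ?_⟩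
  have e1 := Int.mul_ediv_add_emod (m - 1) ((k:ℤ)^2)
  have e2 := Int.mul_ediv_add_emod r (k:ℤ)
  linear_combination -e1 - e2 - hr_def

lemma exists_rep_y (hk : 2 ≤ k) (m : ℤ) (h1 : 1 ≤ m) (h2 : m ≤ (k:ℤ)^3) :
    ∃ p q j : ℤ, (1 ≤ p ∧ p ≤ k) ∧ (0 ≤ q ∧ q ≤ (k:ℤ) - 1) ∧ (1 ≤ j ∧ j ≤ k) ∧
      m = q * k + p + (j - 1) * (k:ℤ)^2 := by
  have hK : (2:ℤ) ≤ k := by exact_mod_cast hk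
  have hK0 : (0:ℤ) < k := by linarith
  have hK2 : (0:ℤ) < (k:ℤ)^2 := by positivity
  set r : ℤ := (m - 1) % (k:ℤ)^2 with hr_def
  have hr0 : 0 ≤ r := Int.emod_nonneg _ (ne_of_gt hK2)
  have hr1 : r < (k:ℤ)^2 := Int.emod_lt_of_pos _ hK2
  have hs0 : 0 ≤ r % k := Int.emod_nonneg _ (ne_of_gt hK0)
  have hs1 : r % k < k := Int.emod_lt_of_pos _ hK0
  have hq0 : 0 ≤ r / k := Int.ediv_nonneg hr0 (le_of_lt hK0)
  have hq1 : r / k < k := by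
    rw [Int.ediv_lt_iff_lt_mul hK0]; nlinarith
  have hi0 : 0 ≤ (m - 1) / (k:ℤ)^2 := Int.ediv_nonneg (by linarith) (le_of_lt hK2)
  have hi1 : (m - 1) / (k:ℤ)^2 < k := by
    rw [Int.ediv_lt_iff_lt_mul hK2]; nlinarith
  refine ⟨r % k + 1, r / k, (m - 1) / (k:ℤ)^2 + 1,
    ⟨by linarith, by linarith⟩, ⟨by linarith, by linarith⟩, ⟨by linarith, by linarith⟩, ?_⟩
  have e1 := Int.mul_ediv_add_emod (m - 1) ((k:ℤ)^2)
  have e2 := Int.mul_ediv_add_emod r (k:ℤ)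
  linear_combination -e1 - e2 - hr_def

end

section
variable {k : ℕ}

lemma Bset_sep (hk : 2 ≤ k) {b b' : ℤ × ℤ} (hb : b ∈ Bset k) (hb' : b' ∈ Bset k)
    (h : |b.1 - b'.1| + |b.2 - b'.2| < (k:ℤ)) : b = b' := by
  rw [mem_Bset_iff] at hb hb'
  obtain ⟨p, q, i, j, ⟨h1, h2⟩, ⟨h3, h4⟩, ⟨h5, h6⟩, ⟨h7, h8⟩, h9, h10⟩ := hb
  obtain ⟨p', q', i', j', ⟨h1', h2'⟩, ⟨h3', h4'⟩, ⟨h5', h6'⟩, ⟨h7', h8'⟩, h9', h10'⟩ := hb'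
  have hK : (2:ℤ) ≤ k := by exact_mod_cast hk
  obtain ⟨-, -, -, -, hX0, hY0⟩ := key_sep (k:ℤ) hK (p - p') (q - q') (i - i') (j - j')
    (b.1 - b'.1) (b.2 - b'.2)
    (abs_le.mpr ⟨by linarith, by linarith⟩) (abs_le.mpr ⟨by linarith, by linarith⟩)
    (by rw [h9, h9']; ring) (by rw [h10, h10']; ring) h
  exact Prod.ext (by linarith) (by linarith)

lemma Bset_col (hk : 2 ≤ k) (m : ℤ) (h1 : 1 ≤ m) (h2 : m ≤ (k:ℤ)^3) :
    ∃ g : Fin k → ℤ, Function.Injective g ∧ ∀ t : Fin k, ((m, g t) : ℤ × ℤ) ∈ Bset k := by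
  obtain ⟨p, q, i, ⟨hp1, hp2⟩, ⟨hq1, hq2⟩, ⟨hi1, hi2⟩, hm⟩ := exists_rep_x hk m h1 h2
  have hK2 : (0:ℤ) < (k:ℤ)^2 := by positivity
  refine ⟨fun t => q * k + p + (t : ℤ) * (k:ℤ)^2, ?_, ?_⟩
  · intro t t' ht
    simp only at ht
    have h2' : (t:ℤ) * (k:ℤ)^2 = (t':ℤ) * (k:ℤ)^2 := by linarith
    have : (t : ℤ) = (t' : ℤ) := mul_right_cancel₀ (ne_of_gt hK2) h2'
    exact Fin.ext (by exact_mod_cast this)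
  · intro t
    have ht : (t : ℤ) < k := by exact_mod_cast t.isLt
    have ht0 : (0:ℤ) ≤ (t : ℤ) := by positivity
    rw [mem_Bset_iff]
    exact ⟨p, q, i, (t : ℤ) + 1, ⟨hp1, hp2⟩, ⟨hq1, hq2⟩, ⟨hi1, hi2⟩,
      ⟨by linarith, by linarith⟩, hm, by ring⟩

lemma Bset_row (hk : 2 ≤ k) (m : ℤ) (h1 : 1 ≤ m) (h2 : m ≤ (k:ℤ)^3) :
    ∃ g : Fin k → ℤ, Function.Injective g ∧ ∀ t : Fin k, ((g t, m) : ℤ × ℤ) ∈ Bset k := by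
  obtain ⟨p, q, j, ⟨hp1, hp2⟩, ⟨hq1, hq2⟩, ⟨hj1, hj2⟩, hm⟩ := exists_rep_y hk m h1 h2
  have hK2 : (0:ℤ) < (k:ℤ)^2 := by positivity
  refine ⟨fun t => p * k - q + (t : ℤ) * (k:ℤ)^2, ?_, ?_⟩
  · intro t t' ht
    simp only at ht
    have h2' : (t:ℤ) * (k:ℤ)^2 = (t':ℤ) * (k:ℤ)^2 := by linarith
    have : (t : ℤ) = (t' : ℤ) := mul_right_cancel₀ (ne_of_gt hK2) h2'
    exact Fin.ext (by exact_mod_cast this)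
  · intro t
    have ht : (t : ℤ) < k := by exact_mod_cast t.isLt
    have ht0 : (0:ℤ) ≤ (t : ℤ) := by positivity
    rw [mem_Bset_iff]
    exact ⟨p, q, (t : ℤ) + 1, j, ⟨hp1, hp2⟩, ⟨hq1, hq2⟩,
      ⟨by linarith, by linarith⟩, ⟨hj1, hj2⟩, by ring, hm⟩

end

section
variable {k : ℕ}

@[simp] lemma Gk_adj_aa {i j : Fin (k^3)} :
    (Gk k).Adj (Sum.inl i) (Sum.inl j) ↔ i ≠ j := by
  simp [Gk, SimpleGraph.fromRel_adj, GkRel]; tauto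

@[simp] lemma Gk_adj_ab {i : Fin (k^3)} {b : { b : ℤ × ℤ // b ∈ Bset k }} :
    (Gk k).Adj (Sum.inl i) (Sum.inr (Sum.inl b)) ↔ (i : ℤ) + 1 < b.1.1 := by
  simp [Gk, SimpleGraph.fromRel_adj, GkRel]

@[simp] lemma Gk_adj_ba {i : Fin (k^3)} {b : { b : ℤ × ℤ // b ∈ Bset k }} :
    (Gk k).Adj (Sum.inr (Sum.inl b)) (Sum.inl i) ↔ (i : ℤ) + 1 < b.1.1 := by
  rw [SimpleGraph.adj_comm]; exact Gk_adj_ab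

@[simp] lemma Gk_adj_ac {i j : Fin (k^3)} :
    ¬ (Gk k).Adj (Sum.inl i) (Sum.inr (Sum.inr j)) := by
  simp [Gk, SimpleGraph.fromRel_adj, GkRel]

@[simp] lemma Gk_adj_ca {i j : Fin (k^3)} :
    ¬ (Gk k).Adj (Sum.inr (Sum.inr j)) (Sum.inl i) := by
  rw [SimpleGraph.adj_comm]; exact Gk_adj_ac

@[simp] lemma Gk_adj_bb {b b' : { b : ℤ × ℤ // b ∈ Bset k }} :
    (Gk k).Adj (Sum.inr (Sum.inl b)) (Sum.inr (Sum.inl b')) ↔ b ≠ b' := by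
  simp [Gk, SimpleGraph.fromRel_adj, GkRel]; tauto

@[simp] lemma Gk_adj_bc {b : { b : ℤ × ℤ // b ∈ Bset k }} {j : Fin (k^3)} :
    (Gk k).Adj (Sum.inr (Sum.inl b)) (Sum.inr (Sum.inr j)) ↔ b.1.2 < (j : ℤ) + 1 := by
  simp [Gk, SimpleGraph.fromRel_adj, GkRel]

@[simp] lemma Gk_adj_cb {b : { b : ℤ × ℤ // b ∈ Bset k }} {j : Fin (k^3)} :
    (Gk k).Adj (Sum.inr (Sum.inr j)) (Sum.inr (Sum.inl b)) ↔ b.1.2 < (j : ℤ) + 1 := by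
  rw [SimpleGraph.adj_comm]; exact Gk_adj_bc

@[simp] lemma Gk_adj_cc {i j : Fin (k^3)} :
    (Gk k).Adj (Sum.inr (Sum.inr i)) (Sum.inr (Sum.inr j)) ↔ i ≠ j := by
  simp [Gk, SimpleGraph.fromRel_adj, GkRel]; tauto

end

section
variable {V' : Type*} [Fintype V']

lemma le_sdPair (G : SimpleGraph V') (x y : V') (n : ℕ) (f : Fin n → V')
    (hinj : Function.Injective f)
    (h : ∀ m, f m ≠ x ∧ f m ≠ y ∧ ¬(G.Adj (f m) x ↔ G.Adj (f m) y)) :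
    n ≤ sdPair G x y := by
  classical
  have hsub : ∀ m ∈ (Finset.univ : Finset (Fin n)), f m ∈
      (Finset.univ.filter fun z => z ≠ x ∧ z ≠ y ∧ ¬(G.Adj z x ↔ G.Adj z y)) := by
    intro m _
    simp only [Finset.mem_filter, Finset.mem_univ, true_and]
    exact h m
  have := Finset.card_le_card_of_injOn f hsub (hinj.injOn)
  simpa [sdPair] using this

lemma sdPair_comm (G : SimpleGraph V') (x y : V') : sdPair G x y = sdPair G y x := by
  unfold sdPair
  congr 1
  apply Finset.filter_congr
  intro z _
  constructor
  · rintro ⟨h1, h2, h3⟩; exact ⟨h2, h1, fun h => h3 h.symm⟩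
  · rintro ⟨h1, h2, h3⟩; exact ⟨h2, h1, fun h => h3 h.symm⟩

lemma sdPair_iso {W' : Type*} [Fintype W'] {G : SimpleGraph V'} {H : SimpleGraph W'}
    (e : G ≃g H) (x y : V') : sdPair H (e x) (e y) = sdPair G x y := by
  classical
  unfold sdPair
  apply Finset.card_bij (fun z _ => e.symm z)
  · intro z hz
    simp only [Finset.mem_filter, Finset.mem_univ, true_and] at hz ⊢
    obtain ⟨h1, h2, h3⟩ := hz
    refine ⟨fun h => h1 (by rw [← h]; simp), fun h => h2 (by rw [← h]; simp), fun h => h3 ?_⟩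
    have hx : H.Adj z (e x) ↔ G.Adj (e.symm z) x := by
      conv_lhs => rw [show z = e (e.symm z) by simp]
      exact e.map_adj_iff
    have hy : H.Adj z (e y) ↔ G.Adj (e.symm z) y := by
      conv_lhs => rw [show z = e (e.symm z) by simp]
      exact e.map_adj_iff
    rw [hx, hy]; exact h
  · intro z₁ h₁ z₂ h₂ h
    exact e.symm.injective h
  · intro z hz
    simp only [Finset.mem_filter, Finset.mem_univ, true_and] at hz ⊢
    obtain ⟨h1, h2, h3⟩ := hz
    refine ⟨e z, ⟨fun h => h1 (e.injective h), fun h => h2 (e.injective h), fun h => h3 ?_⟩, by simp⟩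
    have hx : H.Adj (e z) (e x) ↔ G.Adj z x := e.map_adj_iff
    have hy : H.Adj (e z) (e y) ↔ G.Adj z y := e.map_adj_iff
    rw [← hx, ← hy]; exact h

end

section
variable {k : ℕ}

lemma k_lt_k3 (hk : 2 ≤ k) : k < k ^ 3 := by
  have h4 : 4 ≤ k * k := Nat.mul_le_mul hk hk
  calc k < 4 * k := by omega
  _ ≤ (k * k) * k := Nat.mul_le_mul_right k h4
  _ = k ^ 3 := by ring

lemma LAA (hk : 2 ≤ k) (i i' : Fin (k^3)) (h : (i:ℕ) < (i':ℕ)) :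
    k ≤ sdPair (Gk k) (Sum.inl i) (Sum.inl i') := by
  have hi' : ((i':ℕ) : ℤ) < (k:ℤ)^3 := by exact_mod_cast i'.isLt
  obtain ⟨g, ginj, gmem⟩ := Bset_col hk ((i':ℤ) + 1) (by omega) (by linarith)
  apply le_sdPair _ _ _ k (fun t => Sum.inr (Sum.inl ⟨((i':ℤ) + 1, g t), gmem t⟩))
  · intro t t' ht
    simp only [Sum.inr.injEq, Sum.inl.injEq, Subtype.mk.injEq, Prod.mk.injEq, true_and] at ht
    exact ginj ht
  · intro t
    refine ⟨by simp, by simp, ?_⟩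
    rw [Gk_adj_ba, Gk_adj_ba]
    have : ((i:ℕ) : ℤ) < ((i':ℕ) : ℤ) := by exact_mod_cast h
    simp only
    intro hcon
    exact absurd (hcon.mp (by linarith)) (by linarith)

lemma LCC (hk : 2 ≤ k) (j j' : Fin (k^3)) (h : (j:ℕ) < (j':ℕ)) :
    k ≤ sdPair (Gk k) (Sum.inr (Sum.inr j)) (Sum.inr (Sum.inr j')) := by
  have hj' : ((j':ℕ) : ℤ) < (k:ℤ)^3 := by exact_mod_cast j'.isLt
  have hjj : ((j:ℕ) : ℤ) < ((j':ℕ) : ℤ) := by exact_mod_cast h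
  obtain ⟨g, ginj, gmem⟩ := Bset_row hk ((j:ℤ) + 1) (by omega) (by linarith)
  apply le_sdPair _ _ _ k (fun t => Sum.inr (Sum.inl ⟨(g t, (j:ℤ) + 1), gmem t⟩))
  · intro t t' ht
    simp only [Sum.inr.injEq, Sum.inl.injEq, Subtype.mk.injEq, Prod.mk.injEq, and_true] at ht
    exact ginj ht
  · intro t
    refine ⟨by simp, by simp, ?_⟩
    rw [Gk_adj_bc, Gk_adj_bc]
    simp only
    intro hcon
    exact absurd (hcon.mpr (by linarith)) (by linarith)

lemma LAC (hk : 2 ≤ k) (i j : Fin (k^3)) :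
    k ≤ sdPair (Gk k) (Sum.inl i) (Sum.inr (Sum.inr j)) := by
  have hkk := k_lt_k3 hk
  apply le_sdPair _ _ _ k (fun t =>
    Sum.inl (⟨if (t:ℕ) < (i:ℕ) then (t:ℕ) else (t:ℕ) + 1, by split_ifs <;> omega⟩ : Fin (k^3)))
  · intro t t' ht
    simp only [Sum.inl.injEq, Fin.mk.injEq] at ht
    have := t.isLt; have := t'.isLt
    apply Fin.ext
    split_ifs at ht <;> omega
  · intro t
    have hne : (if (t:ℕ) < (i:ℕ) then (t:ℕ) else (t:ℕ) + 1) ≠ (i:ℕ) := by split_ifs <;> omega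
    have hne' : (⟨if (t:ℕ) < (i:ℕ) then (t:ℕ) else (t:ℕ) + 1, by split_ifs <;> omega⟩ : Fin (k^3)) ≠ i :=
      fun hh => hne (congrArg Fin.val hh)
    refine ⟨?_, by simp, ?_⟩
    · simp only [ne_eq, Sum.inl.injEq]
      exact fun hh => hne' hh
    · intro hcon
      exact Gk_adj_ac (hcon.mp (Gk_adj_aa.mpr hne'))

end

section
variable {k : ℕ}

lemma LAB (hk : 2 ≤ k) (i : Fin (k^3)) (b : { b : ℤ × ℤ // b ∈ Bset k }) :
    k ≤ sdPair (Gk k) (Sum.inl i) (Sum.inr (Sum.inl b)) := by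
  have hK : (2:ℤ) ≤ k := by exact_mod_cast hk
  have hK3 : (k:ℤ) ≤ (k:ℤ)^3 := by
    have h2 : (1:ℤ) ≤ (k:ℤ)^2 := by nlinarith
    calc (k:ℤ) = (k:ℤ) * 1 := by ring
    _ ≤ (k:ℤ) * (k:ℤ)^2 := mul_le_mul_of_nonneg_left h2 (by linarith)
    _ = (k:ℤ)^3 := by ring
  obtain ⟨⟨hx1, hx2⟩, ⟨hy1, hy2⟩⟩ := Bset_bounds hk b.2
  have hkk := k_lt_k3 hk
  by_cases hbx : b.1.1 = 1
  · by_cases hi : (i:ℕ) = 0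
    · -- other a-vertices distinguish
      apply le_sdPair _ _ _ k (fun t => Sum.inl (⟨(t:ℕ) + 1, by omega⟩ : Fin (k^3)))
      · intro t t' ht
        simp only [Sum.inl.injEq, Fin.mk.injEq] at ht
        exact Fin.ext (by omega)
      · intro t
        have hne' : (⟨(t:ℕ) + 1, by omega⟩ : Fin (k^3)) ≠ i :=
          fun hh => by have := congrArg Fin.val hh; simp [hi] at this
        refine ⟨by simpa using hne', by simp, ?_⟩
        intro hcon
        have h2 := hcon.mp (Gk_adj_aa.mpr hne')
        rw [Gk_adj_ab, hbx] at h2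
        have : (0:ℤ) ≤ ((t:ℕ) + 1 : ℕ) := by positivity
        push_cast at h2
        linarith
    · -- column 2
      obtain ⟨g, ginj, gmem⟩ := Bset_col hk 2 (by omega) (by nlinarith)
      apply le_sdPair _ _ _ k (fun t => Sum.inr (Sum.inl ⟨(2, g t), gmem t⟩))
      · intro t t' ht
        simp only [Sum.inr.injEq, Sum.inl.injEq, Subtype.mk.injEq, Prod.mk.injEq, true_and] at ht
        exact ginj ht
      · intro t
        have hib : (1:ℤ) ≤ ((i:ℕ) : ℤ) := by
          have : 1 ≤ (i:ℕ) := by omega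
          exact_mod_cast this
        have hneb : (⟨(2, g t), gmem t⟩ : { b : ℤ × ℤ // b ∈ Bset k }) ≠ b := by
          intro hh
          have h12 : b.1.1 = 2 := by rw [← hh]
          rw [hbx] at h12
          norm_num at h12
        refine ⟨by simp, by simpa using hneb, ?_⟩
        intro hcon
        have h2 := hcon.mpr (Gk_adj_bb.mpr hneb)
        rw [Gk_adj_ba] at h2
        simp at h2
        linarith
  · -- column 1
    obtain ⟨g, ginj, gmem⟩ := Bset_col hk 1 (by omega) (by linarith)
    apply le_sdPair _ _ _ k (fun t => Sum.inr (Sum.inl ⟨(1, g t), gmem t⟩))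
    · intro t t' ht
      simp only [Sum.inr.injEq, Sum.inl.injEq, Subtype.mk.injEq, Prod.mk.injEq, true_and] at ht
      exact ginj ht
    · intro t
      have hneb : (⟨(1, g t), gmem t⟩ : { b : ℤ × ℤ // b ∈ Bset k }) ≠ b := by
        intro hh
        exact hbx (by rw [← hh])
      refine ⟨by simp, by simpa using hneb, ?_⟩
      intro hcon
      have h2 := hcon.mpr (Gk_adj_bb.mpr hneb)
      rw [Gk_adj_ba] at h2
      simp at h2
      have : (0:ℤ) ≤ ((i:ℕ) : ℤ) := by positivity
      linarith

lemma LBC (hk : 2 ≤ k) (b : { b : ℤ × ℤ // b ∈ Bset k }) (j : Fin (k^3)) :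
    k ≤ sdPair (Gk k) (Sum.inr (Sum.inl b)) (Sum.inr (Sum.inr j)) := by
  have hK : (2:ℤ) ≤ k := by exact_mod_cast hk
  have hK3 : (k:ℤ) ≤ (k:ℤ)^3 := by
    have h2 : (1:ℤ) ≤ (k:ℤ)^2 := by nlinarith
    calc (k:ℤ) = (k:ℤ) * 1 := by ring
    _ ≤ (k:ℤ) * (k:ℤ)^2 := mul_le_mul_of_nonneg_left h2 (by linarith)
    _ = (k:ℤ)^3 := by ring
  obtain ⟨⟨hx1, hx2⟩, ⟨hy1, hy2⟩⟩ := Bset_bounds hk b.2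
  have hkk := k_lt_k3 hk
  have hj3 : ((j:ℕ) : ℤ) < (k:ℤ)^3 := by exact_mod_cast j.isLt
  by_cases hby : b.1.2 = (k:ℤ)^3
  · by_cases hj : (j:ℕ) = k^3 - 1
    · -- other c-vertices distinguish
      apply le_sdPair _ _ _ k (fun t => Sum.inr (Sum.inr (⟨(t:ℕ), by omega⟩ : Fin (k^3))))
      · intro t t' ht
        simp only [Sum.inr.injEq, Fin.mk.injEq] at ht
        exact Fin.ext (by omega)
      · intro t
        have htk : (t:ℕ) < k := t.isLt
        have hne' : (⟨(t:ℕ), by omega⟩ : Fin (k^3)) ≠ j :=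
          fun hh => by have := congrArg Fin.val hh; simp [hj] at this; omega
        refine ⟨by simp, by simpa using hne', ?_⟩
        intro hcon
        have h2 := hcon.mpr (Gk_adj_cc.mpr hne')
        rw [Gk_adj_cb, hby] at h2
        have : ((t:ℕ) : ℤ) < (k:ℤ) := by exact_mod_cast htk
        simp at h2
        linarith
    · -- row k³ - 1
      have hjle : ((j:ℕ) : ℤ) ≤ (k:ℤ)^3 - 2 := by
        have h1 : (j:ℕ) < k^3 - 1 := by omega
        have h2 : ((j:ℕ) : ℤ) < ((k^3 - 1 : ℕ) : ℤ) := by exact_mod_cast h1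
        have h3 : ((k^3 - 1 : ℕ) : ℤ) = (k:ℤ)^3 - 1 := by
          push_cast [Nat.cast_sub (by omega : 1 ≤ k^3)]; ring
        omega
      obtain ⟨g, ginj, gmem⟩ := Bset_row hk ((k:ℤ)^3 - 1) (by nlinarith) (by linarith)
      apply le_sdPair _ _ _ k (fun t => Sum.inr (Sum.inl ⟨(g t, (k:ℤ)^3 - 1), gmem t⟩))
      · intro t t' ht
        simp only [Sum.inr.injEq, Sum.inl.injEq, Subtype.mk.injEq, Prod.mk.injEq, and_true] at ht
        exact ginj ht
      · intro t
        have hneb : (⟨(g t, (k:ℤ)^3 - 1), gmem t⟩ : { b : ℤ × ℤ // b ∈ Bset k }) ≠ b := by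
          intro hh
          have h12 : b.1.2 = (k:ℤ)^3 - 1 := by rw [← hh]
          rw [hby] at h12
          linarith
        refine ⟨by simpa using hneb, by simp, ?_⟩
        intro hcon
        have h2 := hcon.mp (Gk_adj_bb.mpr hneb)
        rw [Gk_adj_bc] at h2
        simp at h2
        linarith
  · -- row k³
    have hby' : b.1.2 ≤ (k:ℤ)^3 - 1 := by
      rcases lt_or_eq_of_le hy2 with h | h
      · linarith
      · exact absurd h hby
    obtain ⟨g, ginj, gmem⟩ := Bset_row hk ((k:ℤ)^3) (by nlinarith) le_rfl
    apply le_sdPair _ _ _ k (fun t => Sum.inr (Sum.inl ⟨(g t, (k:ℤ)^3), gmem t⟩))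
    · intro t t' ht
      simp only [Sum.inr.injEq, Sum.inl.injEq, Subtype.mk.injEq, Prod.mk.injEq, and_true] at ht
      exact ginj ht
    · intro t
      have hneb : (⟨(g t, (k:ℤ)^3), gmem t⟩ : { b : ℤ × ℤ // b ∈ Bset k }) ≠ b := by
        intro hh
        have h12 : b.1.2 = (k:ℤ)^3 := by rw [← hh]
        exact hby h12
      refine ⟨by simpa using hneb, by simp, ?_⟩
      intro hcon
      have h2 := hcon.mp (Gk_adj_bb.mpr hneb)
      rw [Gk_adj_bc] at h2
      simp at h2
      linarith

end

section
variable {k : ℕ}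

lemma LBB (hk : 2 ≤ k) (b b' : { b : ℤ × ℤ // b ∈ Bset k }) (hne : b ≠ b') :
    k ≤ sdPair (Gk k) (Sum.inr (Sum.inl b)) (Sum.inr (Sum.inl b')) := by
  have hK : (2:ℤ) ≤ k := by exact_mod_cast hk
  obtain ⟨⟨hx1, hx2⟩, ⟨hy1, hy2⟩⟩ := Bset_bounds hk b.2
  obtain ⟨⟨hx1', hx2'⟩, ⟨hy1', hy2'⟩⟩ := Bset_bounds hk b'.2
  set x := b.1.1 with hxdef
  set y := b.1.2 with hydef
  set x' := b'.1.1 with hxdef'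
  set y' := b'.1.2 with hydef'
  have hsep : (k:ℤ) ≤ |x - x'| + |y - y'| := by
    by_contra hcon
    push_neg at hcon
    exact hne (Subtype.ext (Bset_sep hk b.2 b'.2 hcon))
  set mx := min x x' with hmx
  set Mx := max x x' with hMx
  set my := min y y' with hmy
  set My := max y y' with hMy
  have habsx : Mx - mx = |x - x'| := by rw [hMx, hmx, max_sub_min_eq_abs, abs_sub_comm]
  have habsy : My - my = |y - y'| := by rw [hMy, hmy, max_sub_min_eq_abs, abs_sub_comm]
  have hmx1 : 1 ≤ mx := le_min hx1 hx1'
  have hMx3 : Mx ≤ (k:ℤ)^3 := max_le hx2 hx2'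
  have hmy1 : 1 ≤ my := le_min hy1 hy1'
  have hMy3 : My ≤ (k:ℤ)^3 := max_le hy2 hy2'
  have hmxMx : mx ≤ Mx := min_le_max
  have hmyMy : my ≤ My := min_le_max
  set A : ℕ := (Mx - mx).toNat with hA
  set C : ℕ := (My - my).toNat with hC
  have hN : ((k^3 : ℕ) : ℤ) = (k:ℤ)^3 := by push_cast; ring
  have hkAC : (k:ℤ) ≤ (Mx - mx) + (My - my) := by rw [habsx, habsy]; exact hsep
  have hAC : k ≤ A + C := by omega
  apply le_sdPair _ _ _ k (fun t =>
    if h : (t:ℕ) < A then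
      Sum.inl (⟨(mx - 1).toNat + (t:ℕ), by omega⟩ : Fin (k^3))
    else
      Sum.inr (Sum.inr (⟨my.toNat + ((t:ℕ) - A), by
        have := t.isLt; omega⟩ : Fin (k^3))))
  · intro t t' ht
    have h1 := t.isLt; have h2 := t'.isLt
    by_cases ha : (t:ℕ) < A <;> by_cases ha' : (t':ℕ) < A <;>
      simp only [ha, ha', dif_pos, dif_neg, not_false_iff, dite_true, dite_false] at ht
    · simp only [Sum.inl.injEq, Fin.mk.injEq] at ht
      exact Fin.ext (by omega)
    · exact absurd ht (by simp)
    · exact absurd ht (by simp)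
    · simp only [Sum.inr.injEq, Fin.mk.injEq] at ht
      exact Fin.ext (by omega)
  · intro t
    by_cases ha : (t:ℕ) < A
    · simp only [ha, dif_pos]
      refine ⟨by simp, by simp, ?_⟩
      rw [Gk_adj_ab, Gk_adj_ab]
      have hcast : (((mx - 1).toNat + (t:ℕ) : ℕ) : ℤ) = mx - 1 + (t:ℕ) := by
        push_cast [Int.toNat_of_nonneg (by omega : (0:ℤ) ≤ mx - 1)]; ring
      have hvA : ((t:ℕ) : ℤ) < Mx - mx := by
        have : ((t:ℕ) : ℤ) < ((A:ℕ) : ℤ) := by exact_mod_cast ha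
        omega
      have ht0 : (0:ℤ) ≤ ((t:ℕ) : ℤ) := by positivity
      simp only [Fin.val_mk, hcast]
      -- n + 1 = mx + t, mx ≤ n+1 < Mx
      rcases lt_trichotomy x x' with hlt | heq | hgt
      · have h1 : mx = x := min_eq_left (le_of_lt hlt)
        have h2 : Mx = x' := max_eq_right (le_of_lt hlt)
        intro hcon
        have := hcon.mpr (by omega)
        omega
      · exact absurd heq (by omega)
      · have h1 : mx = x' := min_eq_right (le_of_lt hgt)
        have h2 : Mx = x := max_eq_left (le_of_lt hgt)
        intro hcon
        have := hcon.mp (by omega)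
        omega
    · simp only [ha, dif_neg, not_false_iff]
      refine ⟨by simp, by simp, ?_⟩
      rw [Gk_adj_cb, Gk_adj_cb]
      have htlt := t.isLt
      have hrC : (t:ℕ) - A < C := by omega
      have hcast : ((my.toNat + ((t:ℕ) - A) : ℕ) : ℤ) = my + ((t:ℕ) - A : ℕ) := by
        push_cast [Int.toNat_of_nonneg (by omega : (0:ℤ) ≤ my)]; ring
      have hvC : (((t:ℕ) - A : ℕ) : ℤ) < My - my := by
        have : (((t:ℕ) - A : ℕ) : ℤ) < ((C:ℕ) : ℤ) := by exact_mod_cast hrC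
        omega
      have ht0 : (0:ℤ) ≤ (((t:ℕ) - A : ℕ) : ℤ) := by positivity
      simp only [Fin.val_mk, hcast]
      rcases lt_trichotomy y y' with hlt | heq | hgt
      · have h1 : my = y := min_eq_left (le_of_lt hlt)
        have h2 : My = y' := max_eq_right (le_of_lt hlt)
        intro hcon
        have := hcon.mp (by omega)
        omega
      · exact absurd heq (by omega)
      · have h1 : my = y' := min_eq_right (le_of_lt hgt)
        have h2 : My = y := max_eq_left (le_of_lt hgt)
        intro hcon
        have := hcon.mpr (by omega)
        omega

end

lemma Gk_sd (k : ℕ) (hk : 2 ≤ k) :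
    ∀ u v : GkVtx k, u ≠ v → k ≤ sdPair (Gk k) u v := by
  rintro (i | b | j) (i' | b' | j') huv
  · rcases Nat.lt_or_ge (i : ℕ) (i' : ℕ) with h | h
    · exact LAA hk i i' h
    · have h' : (i' : ℕ) < (i : ℕ) := by
        rcases Nat.lt_or_ge (i' : ℕ) (i : ℕ) with h2 | h2
        · exact h2
        · exact absurd (Fin.ext (le_antisymm h2 h)) (fun hh => huv (by rw [hh]))
      rw [sdPair_comm]
      exact LAA hk i' i h'
  · exact LAB hk i b'
  · exact LAC hk i j'
  · rw [sdPair_comm]; exact LAB hk i' b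
  · exact LBB hk b b' (fun hh => huv (by rw [hh]))
  · exact LBC hk b j'
  · rw [sdPair_comm]; exact LAC hk i' j
  · rw [sdPair_comm]; exact LBC hk b' j
  · rcases Nat.lt_or_ge (j : ℕ) (j' : ℕ) with h | h
    · exact LCC hk j j' h
    · have h' : (j' : ℕ) < (j : ℕ) := by
        rcases Nat.lt_or_ge (j' : ℕ) (j : ℕ) with h2 | h2
        · exact h2
        · exact absurd (Fin.ext (le_antisymm h2 h)) (fun hh => huv (by rw [hh]))
      rw [sdPair_comm]
      exact LCC hk j' j h'

noncomputable def GkL (k : ℕ) : GkVtx k → ℝ :=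
  Sum.elim (fun _ => -((k:ℝ)^3) - 1)
    (Sum.elim (fun b => 1/2 - ((b.1.1 : ℤ) : ℝ)) (fun j => (k:ℝ)^3 - ((j : ℕ) : ℝ)))

noncomputable def GkR (k : ℕ) : GkVtx k → ℝ :=
  Sum.elim (fun i => -(((i : ℕ) : ℝ) + 1))
    (Sum.elim (fun b => (k:ℝ)^3 + 1/2 - ((b.1.2 : ℤ) : ℝ)) (fun _ => (k:ℝ)^3 + 1))

section
variable {k : ℕ}

lemma fin_cast_lt (i : Fin (k^3)) : (((i : ℕ) : ℝ)) < (k:ℝ)^3 := by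
  have h := i.isLt
  have : ((i:ℕ) : ℝ) < ((k^3 : ℕ) : ℝ) := by exact_mod_cast h
  simpa [push_cast] using by push_cast at this ⊢; linarith

lemma Bset_bounds_real (hk : 2 ≤ k) {v : ℤ × ℤ} (hv : v ∈ Bset k) :
    ((1:ℝ) ≤ (v.1 : ℝ) ∧ (v.1 : ℝ) ≤ (k:ℝ)^3) ∧ ((1:ℝ) ≤ (v.2 : ℝ) ∧ (v.2 : ℝ) ≤ (k:ℝ)^3) := by
  obtain ⟨⟨h1, h2⟩, h3, h4⟩ := Bset_bounds hk hv
  have c1 : ((1:ℤ) : ℝ) ≤ (v.1 : ℝ) := by exact_mod_cast h1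
  have c2 : (v.1 : ℝ) ≤ (((k:ℤ)^3 : ℤ) : ℝ) := by exact_mod_cast h2
  have c3 : ((1:ℤ) : ℝ) ≤ (v.2 : ℝ) := by exact_mod_cast h3
  have c4 : (v.2 : ℝ) ≤ (((k:ℤ)^3 : ℤ) : ℝ) := by exact_mod_cast h4
  push_cast at c1 c2 c3 c4
  exact ⟨⟨c1, c2⟩, c3, c4⟩

lemma int_real_lt (a x : ℤ) : ((a:ℝ) + 3/2 ≤ (x:ℝ)) ↔ a + 1 < x := by
  constructor
  · intro h
    by_contra hcon
    push_neg at hcon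
    have : (x:ℝ) ≤ (a:ℝ) + 1 := by exact_mod_cast hcon
    linarith
  · intro h
    have h2 : a + 2 ≤ x := by omega
    have : (a:ℝ) + 2 ≤ (x:ℝ) := by exact_mod_cast h2
    linarith

lemma int_real_le_half (a y : ℤ) : ((y:ℝ) ≤ (a:ℝ) + 1/2) ↔ y < a + 1 := by
  constructor
  · intro h
    by_contra hcon
    push_neg at hcon
    have : (a:ℝ) + 1 ≤ (y:ℝ) := by exact_mod_cast hcon
    linarith
  · intro h
    have h2 : y ≤ a := by omega
    have : (y:ℝ) ≤ (a:ℝ) := by exact_mod_cast h2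
    linarith

lemma Gk_interval (hk : 2 ≤ k) : IsIntervalGraph (Gk k) := by
  have hK : (2:ℝ) ≤ (k:ℝ) := by exact_mod_cast hk
  have hK3 : (k:ℝ) ≤ (k:ℝ)^3 := by
    have h2 : (1:ℝ) ≤ (k:ℝ)^2 := by nlinarith
    calc (k:ℝ) = (k:ℝ) * 1 := by ring
    _ ≤ (k:ℝ) * (k:ℝ)^2 := mul_le_mul_of_nonneg_left h2 (by linarith)
    _ = (k:ℝ)^3 := by ring
  refine ⟨GkL k, GkR k, ?_, ?_⟩
  · rintro (i | b | j)
    · have := fin_cast_lt i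
      simp only [GkL, GkR, Sum.elim_inl]
      linarith
    · obtain ⟨⟨h1, h2⟩, h3, h4⟩ := Bset_bounds_real hk b.2
      simp only [GkL, GkR, Sum.elim_inr, Sum.elim_inl]
      linarith
    · simp only [GkL, GkR, Sum.elim_inr]
      linarith
  · rintro (i | b | j) (i' | b' | j')
    · -- a a
      have hi := fin_cast_lt i
      have hi' := fin_cast_lt i'
      simp only [GkL, GkR, Sum.elim_inl, Gk_adj_aa, ne_eq, Sum.inl.injEq]
      constructor
      · intro h; exact ⟨h, by linarith, by linarith⟩
      · rintro ⟨h, -, -⟩; exact h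
    · -- a b
      obtain ⟨⟨h1, h2⟩, h3, h4⟩ := Bset_bounds_real hk b'.2
      simp only [GkL, GkR, Sum.elim_inl, Sum.elim_inr, Gk_adj_ab, ne_eq]
      have key : (1/2 - ((b'.1.1 : ℤ) : ℝ) ≤ -(((i:ℕ):ℝ) + 1)) ↔ ((i:ℕ):ℤ) + 1 < b'.1.1 := by
        rw [← int_real_lt]
        push_cast
        constructor <;> intro <;> linarith
      constructor
      · intro h
        exact ⟨by simp, by linarith, key.mpr h⟩
      · rintro ⟨-, -, h⟩
        exact key.mp h
    · -- a c
      have hj := fin_cast_lt j'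
      have hi := fin_cast_lt i
      simp only [GkL, GkR, Sum.elim_inl, Sum.elim_inr]
      constructor
      · intro h; exact absurd h Gk_adj_ac
      · rintro ⟨-, -, h⟩
        exfalso
        linarith
    · -- b a
      obtain ⟨⟨h1, h2⟩, h3, h4⟩ := Bset_bounds_real hk b.2
      simp only [GkL, GkR, Sum.elim_inl, Sum.elim_inr, Gk_adj_ba, ne_eq]
      have key : (1/2 - ((b.1.1 : ℤ) : ℝ) ≤ -(((i':ℕ):ℝ) + 1)) ↔ ((i':ℕ):ℤ) + 1 < b.1.1 := by
        rw [← int_real_lt]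
        push_cast
        constructor <;> intro <;> linarith
      constructor
      · intro h
        exact ⟨by simp, key.mpr h, by linarith⟩
      · rintro ⟨-, h, -⟩
        exact key.mp h
    · -- b b
      obtain ⟨⟨h1, h2⟩, h3, h4⟩ := Bset_bounds_real hk b.2
      obtain ⟨⟨h1', h2'⟩, h3', h4'⟩ := Bset_bounds_real hk b'.2
      simp only [GkL, GkR, Sum.elim_inr, Sum.elim_inl, Gk_adj_bb, ne_eq, Sum.inr.injEq,
        Sum.inl.injEq]
      constructor
      · intro h; exact ⟨h, by linarith, by linarith⟩
      · rintro ⟨h, -, -⟩; exact h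
    · -- b c
      obtain ⟨⟨h1, h2⟩, h3, h4⟩ := Bset_bounds_real hk b.2
      have hj := fin_cast_lt j'
      simp only [GkL, GkR, Sum.elim_inr, Sum.elim_inl, Gk_adj_bc, ne_eq]
      have key : ((k:ℝ)^3 - ((j':ℕ):ℝ) ≤ (k:ℝ)^3 + 1/2 - ((b.1.2 : ℤ):ℝ)) ↔
          b.1.2 < ((j':ℕ):ℤ) + 1 := by
        rw [← int_real_le_half]
        push_cast
        constructor <;> intro <;> linarith
      constructor
      · intro h
        exact ⟨by simp, by linarith, key.mpr h⟩
      · rintro ⟨-, -, h⟩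
        exact key.mp h
    · -- c a
      have hj := fin_cast_lt j
      have hi := fin_cast_lt i'
      simp only [GkL, GkR, Sum.elim_inl, Sum.elim_inr]
      constructor
      · intro h; exact absurd h Gk_adj_ca
      · rintro ⟨-, h, -⟩
        exfalso
        linarith
    · -- c b
      obtain ⟨⟨h1, h2⟩, h3, h4⟩ := Bset_bounds_real hk b'.2
      have hj := fin_cast_lt j
      simp only [GkL, GkR, Sum.elim_inr, Sum.elim_inl, Gk_adj_cb, ne_eq]
      have key : ((k:ℝ)^3 - ((j:ℕ):ℝ) ≤ (k:ℝ)^3 + 1/2 - ((b'.1.2 : ℤ):ℝ)) ↔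
          b'.1.2 < ((j:ℕ):ℤ) + 1 := by
        rw [← int_real_le_half]
        push_cast
        constructor <;> intro <;> linarith
      constructor
      · intro h
        exact ⟨by simp, key.mpr h, by linarith⟩
      · rintro ⟨-, h, -⟩
        exact key.mp h
    · -- c c
      have hj := fin_cast_lt j
      have hj' := fin_cast_lt j'
      simp only [GkL, GkR, Sum.elim_inr, Gk_adj_cc, ne_eq, Sum.inr.injEq]
      constructor
      · intro h; exact ⟨h, by linarith, by linarith⟩
      · rintro ⟨h, -, -⟩; exact h

end

section
variable {k : ℕ}

lemma uniq_decomp_y (K : ℤ) (hK : 2 ≤ K) (d e E : ℤ)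
    (hd : |d| ≤ K - 1) (he : |e| ≤ K - 1) (h : e * K + d + E * K ^ 2 = 0) :
    d = 0 ∧ e = 0 ∧ E = 0 := by
  obtain ⟨h1, h2, h3⟩ := uniq_decomp K hK e (-d) E (by simpa using he) (by simpa using hd)
    (by linarith)
  exact ⟨by linarith, h1, h3⟩

lemma card_Bset (hk : 2 ≤ k) : (Bset k).card = k ^ 4 := by
  have hK : (2:ℤ) ≤ (k:ℤ) := by exact_mod_cast hk
  rw [Bset, Finset.card_image_of_injOn]
  · rw [Finset.card_product, Finset.card_product, Finset.card_product,
      Int.card_Icc, Int.card_Icc]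
    have e1 : ((k:ℤ) + 1 - 1).toNat = k := by omega
    have e2 : ((k:ℤ) - 1 + 1 - 0).toNat = k := by omega
    rw [e1, e2]
    ring
  · rintro ⟨⟨p, q⟩, ⟨i, j⟩⟩ hmem ⟨⟨p', q'⟩, ⟨i', j'⟩⟩ hmem' heq
    simp only [Finset.mem_coe, Finset.mem_product, Finset.mem_Icc] at hmem hmem'
    obtain ⟨⟨⟨hp1, hp2⟩, hq1, hq2⟩, ⟨hi1, hi2⟩, hj1, hj2⟩ := hmem
    obtain ⟨⟨⟨hp1', hp2'⟩, hq1', hq2'⟩, ⟨hi1', hi2'⟩, hj1', hj2'⟩ := hmem'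
    simp only [Prod.mk.injEq] at heq
    obtain ⟨hx, hy⟩ := heq
    obtain ⟨h1, h2, h3⟩ := uniq_decomp (k:ℤ) hK (p - p') (q - q') (i - i')
      (abs_le.mpr ⟨by linarith, by linarith⟩) (abs_le.mpr ⟨by linarith, by linarith⟩)
      (by linarith)
    have hj : j = j' := by
      have hE : (q - q') * k + (p - p') + (j - j') * (k:ℤ)^2 = 0 := by linarith
      obtain ⟨-, -, h6⟩ := uniq_decomp_y (k:ℤ) hK (p - p') (q - q') (j - j')
        (abs_le.mpr ⟨by linarith, by linarith⟩) (abs_le.mpr ⟨by linarith, by linarith⟩) hE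
      linarith
    simp only [Prod.mk.injEq]
    exact ⟨⟨by linarith, by linarith⟩, by linarith, hj⟩

def rmap (k : ℕ) (b : { b : ℤ × ℤ // b ∈ Bset k }) : ℕ :=
  ((b.1.1 - 1) * (k:ℤ) + (b.1.2 - 1) / (k:ℤ)^2).toNat

def smap (k : ℕ) (b : { b : ℤ × ℤ // b ∈ Bset k }) : ℕ :=
  ((b.1.2 - 1) * (k:ℤ) + (b.1.1 - 1) / (k:ℤ)^2).toNat

lemma ediv_formula (hk : 2 ≤ k) {a j : ℤ} (h0 : 1 ≤ a) (h1 : a ≤ (k:ℤ)^2) :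
    (a - 1 + (j - 1) * (k:ℤ)^2) / (k:ℤ)^2 = j - 1 := by
  have hK : (2:ℤ) ≤ (k:ℤ) := by exact_mod_cast hk
  have hk2 : (0:ℤ) < (k:ℤ)^2 := by positivity
  rw [Int.add_mul_ediv_right _ _ (ne_of_gt hk2)]
  rw [Int.ediv_eq_zero_of_lt (by linarith) (by linarith)]
  ring

lemma rmap_spec (hk : 2 ≤ k) (b : { b : ℤ × ℤ // b ∈ Bset k }) :
    ∃ t : ℤ, 0 ≤ t ∧ t ≤ (k:ℤ) - 1 ∧ ((rmap k b : ℕ) : ℤ) = (b.1.1 - 1) * (k:ℤ) + t ∧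
      rmap k b < k ^ 4 := by
  have hK : (2:ℤ) ≤ (k:ℤ) := by exact_mod_cast hk
  obtain ⟨⟨hx1, hx2⟩, ⟨hy1, hy2⟩⟩ := Bset_bounds hk b.2
  obtain ⟨p, q, i, j, ⟨hp1, hp2⟩, ⟨hq1, hq2⟩, ⟨hi1, hi2⟩, ⟨hj1, hj2⟩, hxe, hye⟩ :=
    mem_Bset_iff.mp b.2
  have ha1 : 1 ≤ q * (k:ℤ) + p := by nlinarith
  have ha2 : q * (k:ℤ) + p ≤ (k:ℤ)^2 := by nlinarith
  have hdiv : (b.1.2 - 1) / (k:ℤ)^2 = j - 1 := by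
    have : b.1.2 - 1 = (q * (k:ℤ) + p) - 1 + (j - 1) * (k:ℤ)^2 := by rw [hye]; ring
    rw [this]
    exact ediv_formula hk ha1 ha2
  have hval : (b.1.1 - 1) * (k:ℤ) + (b.1.2 - 1) / (k:ℤ)^2 = (b.1.1 - 1) * (k:ℤ) + (j - 1) := by
    rw [hdiv]
  have hnonneg : 0 ≤ (b.1.1 - 1) * (k:ℤ) + (j - 1) := by nlinarith
  have hub : (b.1.1 - 1) * (k:ℤ) + (j - 1) ≤ (k:ℤ)^4 - 1 := by
    have h1 : (b.1.1 - 1) * (k:ℤ) ≤ ((k:ℤ)^3 - 1) * (k:ℤ) :=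
      mul_le_mul_of_nonneg_right (by linarith) (by linarith)
    nlinarith
  refine ⟨j - 1, by linarith, by linarith, ?_, ?_⟩
  · rw [rmap, hval, Int.toNat_of_nonneg hnonneg]
  · have hcast : ((k^4 : ℕ) : ℤ) = (k:ℤ)^4 := by push_cast; ring
    have : ((rmap k b : ℕ) : ℤ) < ((k^4 : ℕ) : ℤ) := by
      rw [rmap, hval, Int.toNat_of_nonneg hnonneg, hcast]
      linarith
    exact_mod_cast this

lemma smap_spec (hk : 2 ≤ k) (b : { b : ℤ × ℤ // b ∈ Bset k }) :
    ∃ t : ℤ, 0 ≤ t ∧ t ≤ (k:ℤ) - 1 ∧ ((smap k b : ℕ) : ℤ) = (b.1.2 - 1) * (k:ℤ) + t ∧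
      smap k b < k ^ 4 := by
  have hK : (2:ℤ) ≤ (k:ℤ) := by exact_mod_cast hk
  obtain ⟨⟨hx1, hx2⟩, ⟨hy1, hy2⟩⟩ := Bset_bounds hk b.2
  obtain ⟨p, q, i, j, ⟨hp1, hp2⟩, ⟨hq1, hq2⟩, ⟨hi1, hi2⟩, ⟨hj1, hj2⟩, hxe, hye⟩ :=
    mem_Bset_iff.mp b.2
  have ha1 : 1 ≤ p * (k:ℤ) - q := by nlinarith
  have ha2 : p * (k:ℤ) - q ≤ (k:ℤ)^2 := by nlinarith
  have hdiv : (b.1.1 - 1) / (k:ℤ)^2 = i - 1 := by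
    have : b.1.1 - 1 = (p * (k:ℤ) - q) - 1 + (i - 1) * (k:ℤ)^2 := by rw [hxe]; ring
    rw [this]
    exact ediv_formula hk ha1 ha2
  have hval : (b.1.2 - 1) * (k:ℤ) + (b.1.1 - 1) / (k:ℤ)^2 = (b.1.2 - 1) * (k:ℤ) + (i - 1) := by
    rw [hdiv]
  have hnonneg : 0 ≤ (b.1.2 - 1) * (k:ℤ) + (i - 1) := by nlinarith
  have hub : (b.1.2 - 1) * (k:ℤ) + (i - 1) ≤ (k:ℤ)^4 - 1 := by
    have h1 : (b.1.2 - 1) * (k:ℤ) ≤ ((k:ℤ)^3 - 1) * (k:ℤ) :=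
      mul_le_mul_of_nonneg_right (by linarith) (by linarith)
    nlinarith
  refine ⟨i - 1, by linarith, by linarith, ?_, ?_⟩
  · rw [smap, hval, Int.toNat_of_nonneg hnonneg]
  · have hcast : ((k^4 : ℕ) : ℤ) = (k:ℤ)^4 := by push_cast; ring
    have : ((smap k b : ℕ) : ℤ) < ((k^4 : ℕ) : ℤ) := by
      rw [smap, hval, Int.toNat_of_nonneg hnonneg, hcast]
      linarith
    exact_mod_cast this

end

section
variable {k : ℕ}

lemma div_unique_aux (hk : 2 ≤ k) {x x' t t' : ℤ} (ht0 : 0 ≤ t) (ht1 : t ≤ (k:ℤ) - 1)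
    (ht0' : 0 ≤ t') (ht1' : t' ≤ (k:ℤ) - 1)
    (h : (x - 1) * (k:ℤ) + t = (x' - 1) * (k:ℤ) + t') : x = x' ∧ t = t' := by
  have hK : (2:ℤ) ≤ (k:ℤ) := by exact_mod_cast hk
  have hx : x = x' := by
    rcases lt_trichotomy x x' with hl | he | hg
    · exfalso
      have h1 : x - 1 + 1 ≤ x' - 1 + 1 := by linarith
      have h2 : ((x - 1) + 1) * (k:ℤ) ≤ (x' - 1) * (k:ℤ) :=
        mul_le_mul_of_nonneg_right (by linarith) (by linarith)
      nlinarith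
    · exact he
    · exfalso
      have h2 : ((x' - 1) + 1) * (k:ℤ) ≤ (x - 1) * (k:ℤ) :=
        mul_le_mul_of_nonneg_right (by linarith) (by linarith)
      nlinarith
  refine ⟨hx, ?_⟩
  rw [hx] at h
  linarith

set_option maxHeartbeats 1000000 in
lemma rmap_inj (hk : 2 ≤ k) : Function.Injective (rmap k) := by
  have hK : (2:ℤ) ≤ (k:ℤ) := by exact_mod_cast hk
  intro b b' h
  obtain ⟨t, ht0, ht1, hval, -⟩ := rmap_spec hk b
  obtain ⟨t', ht0', ht1', hval', -⟩ := rmap_spec hk b'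
  have hz : ((rmap k b : ℕ) : ℤ) = ((rmap k b' : ℕ) : ℤ) := by exact_mod_cast h
  rw [hval, hval'] at hz
  obtain ⟨hx, htt⟩ := div_unique_aux hk ht0 ht1 ht0' ht1' hz
  -- x equal and t = j - 1 equal; recover full equality
  obtain ⟨p, q, i, j, ⟨hp1, hp2⟩, ⟨hq1, hq2⟩, ⟨hi1, hi2⟩, ⟨hj1, hj2⟩, hxe, hye⟩ :=
    mem_Bset_iff.mp b.2
  obtain ⟨p', q', i', j', ⟨hp1', hp2'⟩, ⟨hq1', hq2'⟩, ⟨hi1', hi2'⟩, ⟨hj1', hj2'⟩, hxe', hye'⟩ :=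
    mem_Bset_iff.mp b'.2
  -- t = j - 1
  have ha1 : 1 ≤ q * (k:ℤ) + p := by nlinarith
  have ha2 : q * (k:ℤ) + p ≤ (k:ℤ)^2 := by nlinarith
  have ha1' : 1 ≤ q' * (k:ℤ) + p' := by nlinarith
  have ha2' : q' * (k:ℤ) + p' ≤ (k:ℤ)^2 := by nlinarith
  have hdiv : (b.1.2 - 1) / (k:ℤ)^2 = j - 1 := by
    have hh : b.1.2 - 1 = (q * (k:ℤ) + p) - 1 + (j - 1) * (k:ℤ)^2 := by rw [hye]; ring
    rw [hh]; exact ediv_formula hk ha1 ha2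
  have hdiv' : (b'.1.2 - 1) / (k:ℤ)^2 = j' - 1 := by
    have hh : b'.1.2 - 1 = (q' * (k:ℤ) + p') - 1 + (j' - 1) * (k:ℤ)^2 := by rw [hye']; ring
    rw [hh]; exact ediv_formula hk ha1' ha2'
  -- the t from rmap_spec is uniquely determined: (x-1)k + t = (x-1)k + div
  have hval2 : ((rmap k b : ℕ) : ℤ) = (b.1.1 - 1) * (k:ℤ) + (j - 1) := by
    have hnn : 0 ≤ (b.1.1 - 1) * (k:ℤ) + (b.1.2 - 1) / (k:ℤ)^2 := by
      rw [hdiv]; nlinarith [(Bset_bounds hk b.2).1.1]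
    rw [rmap, Int.toNat_of_nonneg hnn, hdiv]
  have hval2' : ((rmap k b' : ℕ) : ℤ) = (b'.1.1 - 1) * (k:ℤ) + (j' - 1) := by
    have hnn : 0 ≤ (b'.1.1 - 1) * (k:ℤ) + (b'.1.2 - 1) / (k:ℤ)^2 := by
      rw [hdiv']; nlinarith [(Bset_bounds hk b'.2).1.1]
    rw [rmap, Int.toNat_of_nonneg hnn, hdiv']
  have hjj : j = j' := by
    rw [hval] at hval2
    rw [hval'] at hval2'
    linarith
  have hxx : b.1.1 = b'.1.1 := hx
  -- from x equality get p,q,i equal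
  have hxeq : p * (k:ℤ) - q + (i - 1) * (k:ℤ)^2 = p' * (k:ℤ) - q' + (i' - 1) * (k:ℤ)^2 := by
    rw [← hxe, ← hxe', hxx]
  obtain ⟨h1, h2, h3⟩ := uniq_decomp (k:ℤ) hK (p - p') (q - q') (i - i')
    (abs_le.mpr ⟨by linarith, by linarith⟩) (abs_le.mpr ⟨by linarith, by linarith⟩)
    (by linarith)
  have hyy : b.1.2 = b'.1.2 := by
    rw [hye, hye']
    rw [hjj]
    have hq : q = q' := by linarith
    have hp : p = p' := by linarith
    rw [hq, hp]
  exact Subtype.ext (Prod.ext hxx hyy)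

set_option maxHeartbeats 1000000 in
lemma smap_inj (hk : 2 ≤ k) : Function.Injective (smap k) := by
  have hK : (2:ℤ) ≤ (k:ℤ) := by exact_mod_cast hk
  intro b b' h
  obtain ⟨t, ht0, ht1, hval, -⟩ := smap_spec hk b
  obtain ⟨t', ht0', ht1', hval', -⟩ := smap_spec hk b'
  have hz : ((smap k b : ℕ) : ℤ) = ((smap k b' : ℕ) : ℤ) := by exact_mod_cast h
  rw [hval, hval'] at hz
  obtain ⟨hy, htt⟩ := div_unique_aux hk ht0 ht1 ht0' ht1' hz
  obtain ⟨p, q, i, j, ⟨hp1, hp2⟩, ⟨hq1, hq2⟩, ⟨hi1, hi2⟩, ⟨hj1, hj2⟩, hxe, hye⟩ :=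
    mem_Bset_iff.mp b.2
  obtain ⟨p', q', i', j', ⟨hp1', hp2'⟩, ⟨hq1', hq2'⟩, ⟨hi1', hi2'⟩, ⟨hj1', hj2'⟩, hxe', hye'⟩ :=
    mem_Bset_iff.mp b'.2
  have ha1 : 1 ≤ p * (k:ℤ) - q := by nlinarith
  have ha2 : p * (k:ℤ) - q ≤ (k:ℤ)^2 := by nlinarith
  have ha1' : 1 ≤ p' * (k:ℤ) - q' := by nlinarith
  have ha2' : p' * (k:ℤ) - q' ≤ (k:ℤ)^2 := by nlinarith
  have hdiv : (b.1.1 - 1) / (k:ℤ)^2 = i - 1 := by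
    have hh : b.1.1 - 1 = (p * (k:ℤ) - q) - 1 + (i - 1) * (k:ℤ)^2 := by rw [hxe]; ring
    rw [hh]; exact ediv_formula hk ha1 ha2
  have hdiv' : (b'.1.1 - 1) / (k:ℤ)^2 = i' - 1 := by
    have hh : b'.1.1 - 1 = (p' * (k:ℤ) - q') - 1 + (i' - 1) * (k:ℤ)^2 := by rw [hxe']; ring
    rw [hh]; exact ediv_formula hk ha1' ha2'
  have hval2 : ((smap k b : ℕ) : ℤ) = (b.1.2 - 1) * (k:ℤ) + (i - 1) := by
    have hnn : 0 ≤ (b.1.2 - 1) * (k:ℤ) + (b.1.1 - 1) / (k:ℤ)^2 := by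
      rw [hdiv]; nlinarith [(Bset_bounds hk b.2).2.1]
    rw [smap, Int.toNat_of_nonneg hnn, hdiv]
  have hval2' : ((smap k b' : ℕ) : ℤ) = (b'.1.2 - 1) * (k:ℤ) + (i' - 1) := by
    have hnn : 0 ≤ (b'.1.2 - 1) * (k:ℤ) + (b'.1.1 - 1) / (k:ℤ)^2 := by
      rw [hdiv']; nlinarith [(Bset_bounds hk b'.2).2.1]
    rw [smap, Int.toNat_of_nonneg hnn, hdiv']
  have hii : i = i' := by
    rw [hval] at hval2
    rw [hval'] at hval2'
    linarith
  have hyy : b.1.2 = b'.1.2 := hy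
  have hyeq : q * (k:ℤ) + p + (j - 1) * (k:ℤ)^2 = q' * (k:ℤ) + p' + (j' - 1) * (k:ℤ)^2 := by
    rw [← hye, ← hye', hyy]
  obtain ⟨h1, h2, h3⟩ := uniq_decomp_y (k:ℤ) hK (p - p') (q - q') (j - j')
    (abs_le.mpr ⟨by linarith, by linarith⟩) (abs_le.mpr ⟨by linarith, by linarith⟩)
    (by linarith)
  have hxx : b.1.1 = b'.1.1 := by
    rw [hxe, hxe']
    have hq : q = q' := by linarith
    have hp : p = p' := by linarith
    rw [hii, hq, hp]
  exact Subtype.ext (Prod.ext hxx hyy)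

end

def ABCrel (k : ℕ) (β : Equiv.Perm (Fin (k^4))) :
    (Fin 3 × Fin (k^4)) → (Fin 3 × Fin (k^4)) → Prop :=
  fun x y => (x.1 = y.1 ∧ x.2 ≠ y.2) ∨ (x.1 = 0 ∧ y.1 = 1 ∧ x.2 < y.2) ∨
    (x.1 = 1 ∧ y.1 = 2 ∧ β x.2 < y.2)

def ABCgraph (k : ℕ) (β : Equiv.Perm (Fin (k^4))) : SimpleGraph (Fin 3 × Fin (k^4)) :=
  SimpleGraph.fromRel (ABCrel k β)

section
variable {k : ℕ} {β : Equiv.Perm (Fin (k^4))}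

lemma fin3_01 : (0:Fin 3) ≠ 1 := by decide
lemma fin3_02 : (0:Fin 3) ≠ 2 := by decide
lemma fin3_12 : (1:Fin 3) ≠ 2 := by decide
lemma fin3_10 : (1:Fin 3) ≠ 0 := by decide
lemma fin3_20 : (2:Fin 3) ≠ 0 := by decide
lemma fin3_21 : (2:Fin 3) ≠ 1 := by decide

lemma ABC_adj_same (m : Fin 3) (i j : Fin (k^4)) :
    (ABCgraph k β).Adj (m, i) (m, j) ↔ i ≠ j := by
  rw [ABCgraph, SimpleGraph.fromRel_adj]
  constructor
  · rintro ⟨-, h | h⟩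
    · rcases h with ⟨-, h2⟩ | ⟨h1, h2, -⟩ | ⟨h1, h2, -⟩
      · exact h2
      · exact absurd (h1.symm.trans h2) fin3_01
      · exact absurd (h1.symm.trans h2) fin3_12
    · rcases h with ⟨-, h2⟩ | ⟨h1, h2, -⟩ | ⟨h1, h2, -⟩
      · exact h2.symm
      · exact absurd (h1.symm.trans h2) fin3_01
      · exact absurd (h1.symm.trans h2) fin3_12
  · intro h
    exact ⟨fun hh => h (congrArg Prod.snd hh), Or.inl (Or.inl ⟨rfl, h⟩)⟩

lemma ABC_adj_01 (i j : Fin (k^4)) :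
    (ABCgraph k β).Adj (0, i) (1, j) ↔ i < j := by
  rw [ABCgraph, SimpleGraph.fromRel_adj]
  constructor
  · rintro ⟨-, h | h⟩
    · rcases h with ⟨h1, -⟩ | ⟨-, -, h3⟩ | ⟨h1, -⟩
      · exact absurd h1 fin3_01
      · exact h3
      · exact absurd h1 fin3_01
    · rcases h with ⟨h1, -⟩ | ⟨h1, -⟩ | ⟨-, h2, -⟩
      · exact absurd h1 fin3_10
      · exact absurd h1 fin3_10
      · exact absurd h2 fin3_02
  · intro h
    refine ⟨fun hh => absurd (congrArg Prod.fst hh) fin3_01, Or.inl ?_⟩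
    exact Or.inr (Or.inl ⟨rfl, rfl, h⟩)

lemma ABC_adj_12 (i j : Fin (k^4)) :
    (ABCgraph k β).Adj (1, i) (2, j) ↔ β i < j := by
  rw [ABCgraph, SimpleGraph.fromRel_adj]
  constructor
  · rintro ⟨-, h | h⟩
    · rcases h with ⟨h1, -⟩ | ⟨h1, -⟩ | ⟨-, -, h3⟩
      · exact absurd h1 fin3_12
      · exact absurd h1 fin3_10
      · exact h3
    · rcases h with ⟨h1, -⟩ | ⟨h1, -⟩ | ⟨h1, -⟩
      · exact absurd h1 fin3_21
      · exact absurd h1 fin3_20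
      · exact absurd h1 fin3_21
  · intro h
    refine ⟨fun hh => absurd (congrArg Prod.fst hh) fin3_12, Or.inl ?_⟩
    exact Or.inr (Or.inr ⟨rfl, rfl, h⟩)

lemma ABC_adj_02 (i j : Fin (k^4)) :
    ¬ (ABCgraph k β).Adj (0, i) (2, j) := by
  rw [ABCgraph, SimpleGraph.fromRel_adj]
  rintro ⟨-, h | h⟩
  · rcases h with ⟨h1, -⟩ | ⟨-, h2, -⟩ | ⟨h1, -⟩
    · exact absurd h1 fin3_02
    · exact absurd h2 fin3_21
    · exact absurd h1 fin3_01
  · rcases h with ⟨h1, -⟩ | ⟨h1, -⟩ | ⟨h1, -⟩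
    · exact absurd h1 fin3_20
    · exact absurd h1 fin3_20
    · exact absurd h1 fin3_21

lemma ABC_isABC : IsABCGraph (ABCgraph k β) := by
  refine ⟨k^4, Equiv.refl _, Equiv.refl _, β, ?_, ?_, ?_, ?_⟩
  · intro m i j
    simpa using ABC_adj_same m i j
  · intro i j
    simpa using ABC_adj_01 i j
  · intro i j
    simpa using ABC_adj_12 i j
  · intro i j
    simpa using ABC_adj_02 i j

end

section
variable {k : ℕ}

lemma k_le_k4 (hk : 2 ≤ k) : k ≤ k^4 := Nat.le_self_pow (by omega) k

lemma k3k_eq (hk : 2 ≤ k) : (k^3 - 1) * k = k^4 - k := by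
  rw [Nat.sub_mul, one_mul, ← pow_succ]

lemma idxA_lt (hk : 2 ≤ k) (i : Fin (k^3)) : (i:ℕ) * k + (k - 1) < k^4 := by
  have hi := i.isLt
  have h1 : (i:ℕ) * k ≤ (k^3 - 1) * k := Nat.mul_le_mul_right k (by omega)
  have h2 := k3k_eq hk
  have h3 := k_le_k4 hk
  omega

lemma idxC_lt (hk : 2 ≤ k) (j : Fin (k^3)) : (j:ℕ) * k < k^4 := by
  have hj := j.isLt
  have h1 : (j:ℕ) * k ≤ (k^3 - 1) * k := Nat.mul_le_mul_right k (by omega)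
  have h2 := k3k_eq hk
  have h3 := k_le_k4 hk
  omega

def idxAF (hk : 2 ≤ k) (i : Fin (k^3)) : Fin (k^4) := ⟨(i:ℕ) * k + (k - 1), idxA_lt hk i⟩

def idxCF (hk : 2 ≤ k) (j : Fin (k^3)) : Fin (k^4) := ⟨(j:ℕ) * k, idxC_lt hk j⟩

lemma idxAF_inj (hk : 2 ≤ k) : Function.Injective (idxAF hk) := by
  intro i i' h
  simp only [idxAF, Fin.mk.injEq] at h
  have h2 : (i:ℕ) * k = (i':ℕ) * k := by omega
  exact Fin.ext (Nat.eq_of_mul_eq_mul_right (by omega) h2)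

lemma idxCF_inj (hk : 2 ≤ k) : Function.Injective (idxCF hk) := by
  intro i i' h
  simp only [idxCF, Fin.mk.injEq] at h
  exact Fin.ext (Nat.eq_of_mul_eq_mul_right (by omega) h)

def rFin (hk : 2 ≤ k) (b : { b : ℤ × ℤ // b ∈ Bset k }) : Fin (k^4) :=
  ⟨rmap k b, by obtain ⟨t, -, -, -, h⟩ := rmap_spec hk b; exact h⟩

def sFin (hk : 2 ≤ k) (b : { b : ℤ × ℤ // b ∈ Bset k }) : Fin (k^4) :=
  ⟨smap k b, by obtain ⟨t, -, -, -, h⟩ := smap_spec hk b; exact h⟩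

lemma rFin_inj (hk : 2 ≤ k) : Function.Injective (rFin hk) := by
  intro b b' h
  simp only [rFin, Fin.mk.injEq] at h
  exact rmap_inj hk h

lemma sFin_inj (hk : 2 ≤ k) : Function.Injective (sFin hk) := by
  intro b b' h
  simp only [sFin, Fin.mk.injEq] at h
  exact smap_inj hk h

noncomputable def rEquiv (hk : 2 ≤ k) : { b : ℤ × ℤ // b ∈ Bset k } ≃ Fin (k^4) :=
  Equiv.ofBijective (rFin hk) (by
    rw [Fintype.bijective_iff_injective_and_card]
    exact ⟨rFin_inj hk, by rw [Fintype.card_coe, card_Bset hk, Fintype.card_fin]⟩)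

noncomputable def sEquiv (hk : 2 ≤ k) : { b : ℤ × ℤ // b ∈ Bset k } ≃ Fin (k^4) :=
  Equiv.ofBijective (sFin hk) (by
    rw [Fintype.bijective_iff_injective_and_card]
    exact ⟨sFin_inj hk, by rw [Fintype.card_coe, card_Bset hk, Fintype.card_fin]⟩)

noncomputable def betaP (hk : 2 ≤ k) : Equiv.Perm (Fin (k^4)) :=
  (rEquiv hk).symm.trans (sEquiv hk)

lemma beta_apply (hk : 2 ≤ k) (b : { b : ℤ × ℤ // b ∈ Bset k }) :
    betaP hk (rFin hk b) = sFin hk b := by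
  have h1 : (rEquiv hk).symm (rFin hk b) = b := by
    have : rFin hk b = rEquiv hk b := rfl
    rw [this, Equiv.symm_apply_apply]
  simp only [betaP, Equiv.trans_apply, h1]
  rfl

noncomputable def phi (hk : 2 ≤ k) : GkVtx k → Fin 3 × Fin (k^4) :=
  Sum.elim (fun i => (0, idxAF hk i))
    (Sum.elim (fun b => (1, rFin hk b)) (fun j => (2, idxCF hk j)))

lemma idxA_lt_r (hk : 2 ≤ k) (i : Fin (k^3)) (b : { b : ℤ × ℤ // b ∈ Bset k }) :
    ((i:ℕ) * k + (k - 1) < rmap k b) ↔ (i:ℤ) + 1 < b.1.1 := by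
  have hK : (2:ℤ) ≤ (k:ℤ) := by exact_mod_cast hk
  obtain ⟨t, ht0, ht1, hval, -⟩ := rmap_spec hk b
  obtain ⟨⟨hx1, hx2⟩, -⟩ := Bset_bounds hk b.2
  rw [← Nat.cast_lt (α := ℤ)]
  push_cast [Nat.cast_sub (by omega : 1 ≤ k)]
  rw [hval]
  constructor
  · intro h
    by_contra hc
    push_neg at hc
    have hmul : (b.1.1 - 1) * (k:ℤ) ≤ ((i:ℕ):ℤ) * (k:ℤ) :=
      mul_le_mul_of_nonneg_right (by omega) (by linarith)
    linarith
  · intro h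
    have h2 : ((i:ℕ):ℤ) + 1 ≤ b.1.1 - 1 := by omega
    have hmul : (((i:ℕ):ℤ) + 1) * (k:ℤ) ≤ (b.1.1 - 1) * (k:ℤ) :=
      mul_le_mul_of_nonneg_right h2 (by linarith)
    have hexp : (((i:ℕ):ℤ) + 1) * (k:ℤ) = ((i:ℕ):ℤ) * (k:ℤ) + (k:ℤ) := by ring
    linarith

lemma s_lt_idxC (hk : 2 ≤ k) (b : { b : ℤ × ℤ // b ∈ Bset k }) (j : Fin (k^3)) :
    (smap k b < (j:ℕ) * k) ↔ b.1.2 < (j:ℤ) + 1 := by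
  have hK : (2:ℤ) ≤ (k:ℤ) := by exact_mod_cast hk
  obtain ⟨u, hu0, hu1, hval, -⟩ := smap_spec hk b
  obtain ⟨-, hy1, hy2⟩ := Bset_bounds hk b.2
  rw [← Nat.cast_lt (α := ℤ)]
  push_cast
  rw [hval]
  constructor
  · intro h
    by_contra hc
    push_neg at hc
    have hmul : ((j:ℕ):ℤ) * (k:ℤ) ≤ (b.1.2 - 1) * (k:ℤ) :=
      mul_le_mul_of_nonneg_right (by omega) (by linarith)
    linarith
  · intro h
    have h2 : b.1.2 - 1 ≤ ((j:ℕ):ℤ) - 1 := by omega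
    have hmul : (b.1.2 - 1) * (k:ℤ) ≤ (((j:ℕ):ℤ) - 1) * (k:ℤ) :=
      mul_le_mul_of_nonneg_right h2 (by linarith)
    have hexp : (((j:ℕ):ℤ) - 1) * (k:ℤ) = ((j:ℕ):ℤ) * (k:ℤ) - (k:ℤ) := by ring
    linarith

lemma phi_inj (hk : 2 ≤ k) : Function.Injective (phi hk) := by
  rintro (i | b | j) (i' | b' | j') h <;>
    simp only [phi, Sum.elim_inl, Sum.elim_inr, Prod.mk.injEq] at h
  · exact congrArg Sum.inl (idxAF_inj hk h.2)
  · exact absurd h.1 fin3_01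
  · exact absurd h.1 fin3_02
  · exact absurd h.1 fin3_10
  · exact congrArg (fun b => Sum.inr (Sum.inl b)) (rFin_inj hk h.2)
  · exact absurd h.1 fin3_12
  · exact absurd h.1 fin3_20
  · exact absurd h.1 fin3_21
  · exact congrArg (fun j => Sum.inr (Sum.inr j)) (idxCF_inj hk h.2)

lemma phi_adj (hk : 2 ≤ k) (u v : GkVtx k) :
    (ABCgraph k (betaP hk)).Adj (phi hk u) (phi hk v) ↔ (Gk k).Adj u v := by
  rcases u with i | b | j <;> rcases v with i' | b' | j' <;>
    simp only [phi, Sum.elim_inl, Sum.elim_inr]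
  · rw [ABC_adj_same, Gk_adj_aa]
    exact (idxAF_inj hk).ne_iff
  · rw [ABC_adj_01, Gk_adj_ab, Fin.lt_def]
    exact idxA_lt_r hk i b'
  · rw [iff_iff_implies_and_implies]
    exact ⟨fun h => absurd h (ABC_adj_02 _ _), fun h => absurd h (Gk_adj_ac)⟩
  · rw [SimpleGraph.adj_comm, SimpleGraph.adj_comm (Gk k), ABC_adj_01, Gk_adj_ab, Fin.lt_def]
    exact idxA_lt_r hk i' b
  · rw [ABC_adj_same, Gk_adj_bb]
    exact (rFin_inj hk).ne_iff
  · rw [ABC_adj_12, beta_apply, Gk_adj_bc, Fin.lt_def]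
    exact s_lt_idxC hk b j'
  · rw [iff_iff_implies_and_implies]
    exact ⟨fun h => absurd h.symm (ABC_adj_02 _ _), fun h => absurd h (Gk_adj_ca)⟩
  · rw [SimpleGraph.adj_comm, SimpleGraph.adj_comm (Gk k), ABC_adj_12, beta_apply,
      Gk_adj_bc, Fin.lt_def]
    exact s_lt_idxC hk b' j
  · rw [ABC_adj_same, Gk_adj_cc]
    exact (idxCF_inj hk).ne_iff

end

lemma part3 (k : ℕ) (hk : 2 ≤ k) :
    ∃ (n : ℕ) (G : SimpleGraph (Fin n)), IsIntervalGraph G ∧ 2 ≤ n ∧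
      ∀ u v : Fin n, u ≠ v → k ≤ sdPair G u v := by
  have hpos : 0 < k ^ 3 := by positivity
  have : Nontrivial (GkVtx k) :=
    ⟨Sum.inl (⟨0, hpos⟩ : Fin (k^3)), Sum.inr (Sum.inr (⟨0, hpos⟩ : Fin (k^3))), by simp⟩
  set n := Fintype.card (GkVtx k) with hn
  set ε := Fintype.equivFin (GkVtx k) with he
  refine ⟨n, (Gk k).comap ε.symm, ?_, ?_, ?_⟩
  · obtain ⟨L, R, hLR, hadj⟩ := Gk_interval hk
    refine ⟨L ∘ ε.symm, R ∘ ε.symm, fun v => hLR _, ?_⟩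
    intro u v
    rw [SimpleGraph.comap_adj, hadj]
    simp only [Function.comp_apply]
    constructor
    · rintro ⟨h1, h2, h3⟩
      exact ⟨fun hh => h1 (by rw [hh]), h2, h3⟩
    · rintro ⟨h1, h2, h3⟩
      exact ⟨fun hh => h1 (ε.symm.injective hh), h2, h3⟩
  · rw [hn]
    exact Fintype.one_lt_card_iff_nontrivial.mpr this
  · intro u v huv
    have hne : ε.symm u ≠ ε.symm v := fun hh => huv (ε.symm.injective hh)
    let hiso : Gk k ≃g (Gk k).comap ⇑ε.symm :=
      ⟨ε, fun {a b} => by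
        simp only [Equiv.coe_fn_mk, SimpleGraph.comap_adj, Equiv.symm_apply_apply]⟩
    have := sdPair_iso hiso (ε.symm u) (ε.symm v)
    have hco : ∀ w, hiso w = ε w := fun w => rfl
    have happ : ∀ w, hiso (ε.symm w) = w := fun w => by rw [hco]; exact ε.apply_symm_apply w
    rw [happ, happ] at this
    rw [this]
    exact Gk_sd k hk _ _ hne

lemma part2 (k : ℕ) (hk : 2 ≤ k) :
    ∃ (W : Type) (_ : Fintype W) (H : SimpleGraph W), IsABCGraph H ∧
      ∃ s : Finset W, 2 ≤ s.card ∧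
        ∀ u v : ↥(↑s : Set W), u ≠ v → k ≤ sdPair (H.induce (↑s : Set W)) u v := by
  classical
  have hpos : 0 < k^3 := by positivity
  refine ⟨Fin 3 × Fin (k^4), inferInstance, ABCgraph k (betaP hk), ABC_isABC,
    Finset.univ.image (phi hk), ?_, ?_⟩
  · have h2 : (1:ℕ) < (Finset.univ.image (phi hk)).card := by
      refine Finset.one_lt_card.mpr ⟨phi hk (Sum.inl ⟨0, hpos⟩),
        Finset.mem_image_of_mem _ (Finset.mem_univ _),
        phi hk (Sum.inr (Sum.inr ⟨0, hpos⟩)),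
        Finset.mem_image_of_mem _ (Finset.mem_univ _), ?_⟩
      intro hcon
      exact fin3_02 (congrArg Prod.fst hcon)
    omega
  · intro u v huv
    have hmem : ∀ w : GkVtx k, phi hk w ∈ (↑(Finset.univ.image (phi hk)) :
        Set (Fin 3 × Fin (k^4))) := fun w => by
      simp
    have hsurj : ∀ w : ↥(↑(Finset.univ.image (phi hk)) : Set (Fin 3 × Fin (k^4))),
        ∃ a : GkVtx k, (⟨phi hk a, hmem a⟩ : ↥(↑(Finset.univ.image (phi hk)) :
          Set (Fin 3 × Fin (k^4)))) = w := by
      rintro ⟨w, hw⟩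
      have hw' : ∃ a, phi hk a = w := by simpa using hw
      obtain ⟨a, ha⟩ := hw'
      exact ⟨a, Subtype.ext ha⟩
    let e2 : GkVtx k ≃ ↥(↑(Finset.univ.image (phi hk)) : Set (Fin 3 × Fin (k^4))) :=
      Equiv.ofBijective (fun w => ⟨phi hk w, hmem w⟩)
        ⟨fun a b hab => phi_inj hk (congrArg Subtype.val hab), fun w => hsurj w⟩
    let iso : Gk k ≃g (ABCgraph k (betaP hk)).induce
        (↑(Finset.univ.image (phi hk)) : Set (Fin 3 × Fin (k^4))) :=
      ⟨e2, fun {a b} => by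
        show (ABCgraph k (betaP hk)).Adj (phi hk a) (phi hk b) ↔ (Gk k).Adj a b
        exact phi_adj hk a b⟩
    have hco : ∀ w, iso w = e2 w := fun _ => rfl
    have htrans := sdPair_iso iso (e2.symm u) (e2.symm v)
    rw [hco, hco, Equiv.apply_symm_apply, Equiv.apply_symm_apply] at htrans
    rw [htrans]
    exact Gk_sd k hk _ _ (fun hh => huv (e2.symm.injective hh))

/-- For every `k ≥ 2` the graph `G_k` satisfies `sd(u,v) ≥ k` for every pair of
distinct vertices; hence the class of ABC graphs (and hence the class of interval
graphs) has unbounded symmetric difference: for every `k` there is an ABC graph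
with an induced subgraph all of whose pairs have symmetric difference at least `k`,
and an interval graph all of whose pairs have symmetric difference at least `k`. -/
theorem Gk_sd_ge_and_unbounded_sd (k : ℕ) (hk : 2 ≤ k) :
    (∀ u v : GkVtx k, u ≠ v → k ≤ sdPair (Gk k) u v) ∧
    (∃ (W : Type) (_ : Fintype W) (H : SimpleGraph W), IsABCGraph H ∧
      ∃ s : Finset W, 2 ≤ s.card ∧
        ∀ u v : ↥(↑s : Set W), u ≠ v → k ≤ sdPair (H.induce (↑s : Set W)) u v) ∧
    (∃ (n : ℕ) (G : SimpleGraph (Fin n)), IsIntervalGraph G ∧ 2 ≤ n ∧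
      ∀ u v : Fin n, u ≠ v → k ≤ sdPair G u v) :=
  ⟨Gk_sd k hk, part2 k hk, part3 k hk⟩
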